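/- Let Z be a real random variable and Z̃ₘ a nonincreasing-error sequence of predictors in the sense that sₘ² = E[(Z − Z̃ₘ)²] is nonincreasing in m. If Z is Gaussian with Var(Z) > 0 and sₘ² does not converge to 0, then there exists ε' > 0 such that P(Z ≥ t, Z̃ₘ < t) + P(Z < t, Z̃ₘ ≥ t) ≥ ε' for all m, whenever Z̃ₘ = E[Z | Fₘ] for an increasing filtration (Fₘ) making (Z, Z̃ₘ) jointly Gaussian, E[Z] ≠ t, and the ratios |t − E[Z]|/√Var(Z) lie in [1/M, M] for some M > 1. -/

import Mathlib

open MeasureTheory ProbabilityTheory Filter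
open scoped NNReal ENNReal Topology

section AuxiliaryLemmas

open Real


lemma my_integral_mul_exp_neg_mul_sq_zero {b : ℝ} (hb : 0 < b) :
    ∫ x : ℝ, x * rexp (-b * x ^ 2) = 0 := by
  have hderiv : ∀ x : ℝ, HasDerivAt (fun y : ℝ => -(2 * b)⁻¹ * rexp (-b * y ^ 2))
      (x * rexp (-b * x ^ 2)) x := by
    intro x
    have h1 : HasDerivAt (fun y : ℝ => -b * y ^ 2) (-b * (2 * x)) x :=
      (hasDerivAt_pow 2 x).const_mul (-b) |>.congr_deriv (by ring)
    have := (h1.exp).const_mul (-(2 * b)⁻¹)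
    refine this.congr_deriv ?_
    field_simp
  exact integral_eq_zero_of_hasDerivAt_of_integrable hderiv
    (integrable_mul_exp_neg_mul_sq hb)
    ((integrable_exp_neg_mul_sq hb).const_mul _)

lemma my_integrable_sq_mul_exp {b : ℝ} (hb : 0 < b) :
    Integrable fun x : ℝ => x ^ 2 * rexp (-b * x ^ 2) := by
  have := integrable_rpow_mul_exp_neg_mul_sq hb (s := 2) (by norm_num)
  simpa [Real.rpow_two] using this

lemma my_integral_sq_mul_exp {b : ℝ} (hb : 0 < b) :
    ∫ x : ℝ, x ^ 2 * rexp (-b * x ^ 2) = (2 * b)⁻¹ * Real.sqrt (π / b) := by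
  have hb2 : (2 * b) ≠ 0 := by positivity
  have hderiv : ∀ x : ℝ, HasDerivAt (fun y : ℝ => -(2 * b)⁻¹ * (y * rexp (-b * y ^ 2)))
      (x ^ 2 * rexp (-b * x ^ 2) - (2 * b)⁻¹ * rexp (-b * x ^ 2)) x := by
    intro x
    have h1 : HasDerivAt (fun y : ℝ => -b * y ^ 2) (-b * (2 * x)) x :=
      (hasDerivAt_pow 2 x).const_mul (-b) |>.congr_deriv (by ring)
    have h2 := ((hasDerivAt_id x).mul h1.exp).const_mul (-(2 * b)⁻¹)
    refine h2.congr_deriv ?_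
    simp only [id_eq]
    field_simp
    ring
  have h2int := my_integrable_sq_mul_exp hb
  have hexp := (integrable_exp_neg_mul_sq hb).const_mul ((2 * b)⁻¹)
  have h0 := integral_eq_zero_of_hasDerivAt_of_integrable hderiv (h2int.sub hexp)
    ((integrable_mul_exp_neg_mul_sq hb).const_mul _)
  rw [integral_sub h2int hexp, integral_const_mul, integral_gaussian] at h0
  linarith

lemma my_integral_gaussianReal {μ : ℝ} {v : ℝ≥0} (hv : v ≠ 0) (f : ℝ → ℝ) :
    ∫ x, f x ∂(gaussianReal μ v) = ∫ x, gaussianPDFReal μ v x * f x := by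
  rw [gaussianReal_of_var_ne_zero μ hv]
  have : gaussianPDF μ v = fun x => ((gaussianPDFReal μ v x).toNNReal : ℝ≥0∞) := by
    funext x; rfl
  rw [this, integral_withDensity_eq_integral_smul
    (by exact (measurable_gaussianPDFReal μ v).real_toNNReal) f]
  congr 1
  funext x
  simp [NNReal.smul_def, Real.coe_toNNReal _ (gaussianPDFReal_nonneg μ v x)]

lemma my_integrable_gaussianReal_iff {μ : ℝ} {v : ℝ≥0} (hv : v ≠ 0) (f : ℝ → ℝ) :
    Integrable f (gaussianReal μ v) ↔
      Integrable (fun x => f x * gaussianPDFReal μ v x) (volume : Measure ℝ) := by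
  rw [gaussianReal_of_var_ne_zero μ hv, gaussianPDF_def,
    integrable_withDensity_iff (by exact (measurable_gaussianPDFReal μ v).ennreal_ofReal)
      (by exact Filter.Eventually.of_forall fun x => ENNReal.ofReal_lt_top)]
  constructor
  · intro h
    exact h.congr (Filter.Eventually.of_forall fun x => by
      simp [ENNReal.toReal_ofReal (gaussianPDFReal_nonneg μ v x)])
  · intro h
    exact h.congr (Filter.Eventually.of_forall fun x => by
      simp [ENNReal.toReal_ofReal (gaussianPDFReal_nonneg μ v x)])

lemma my_pdf_shift (μ : ℝ) (v : ℝ≥0) (y : ℝ) :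
    gaussianPDFReal μ v (y + μ) =
      (Real.sqrt (2 * π * v))⁻¹ * rexp (-(2 * (v : ℝ))⁻¹ * y ^ 2) := by
  rw [gaussianPDFReal]
  have h : -(y + μ - μ) ^ 2 / (2 * (v : ℝ)) = -(2 * (v : ℝ))⁻¹ * y ^ 2 := by ring
  rw [h]

lemma my_vpos {v : ℝ≥0} (hv : v ≠ 0) : 0 < (2 * (v : ℝ))⁻¹ := by
  have : 0 < (v : ℝ) := by positivity
  positivity

lemma my_norm_const {v : ℝ≥0} (hv : v ≠ 0) :
    (Real.sqrt (2 * π * v))⁻¹ * Real.sqrt (π / (2 * (v : ℝ))⁻¹) = 1 := by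
  have h1 := integral_gaussianPDFReal_eq_one (0 : ℝ) hv
  have h2 : ∀ y : ℝ, gaussianPDFReal 0 v y =
      (Real.sqrt (2 * π * v))⁻¹ * rexp (-(2 * (v : ℝ))⁻¹ * y ^ 2) := by
    intro y
    simpa using my_pdf_shift 0 v y
  rw [show (fun y : ℝ => gaussianPDFReal 0 v y) = fun y : ℝ =>
      (Real.sqrt (2 * π * v))⁻¹ * rexp (-(2 * (v : ℝ))⁻¹ * y ^ 2) from funext h2] at h1
  rwa [integral_const_mul, integral_gaussian] at h1

lemma my_integral_id_gaussianReal (μ : ℝ) (v : ℝ≥0) :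
    ∫ x, x ∂(gaussianReal μ v) = μ := by
  by_cases hv : v = 0
  · simp [hv, gaussianReal_zero_var, integral_dirac]
  · set c : ℝ := (Real.sqrt (2 * π * v))⁻¹ with hc
    set b : ℝ := (2 * (v : ℝ))⁻¹ with hbdef
    have hb : 0 < b := my_vpos hv
    rw [my_integral_gaussianReal hv]
    have hshift : ∫ x : ℝ, gaussianPDFReal μ v x * x
        = ∫ y : ℝ, gaussianPDFReal μ v (y + μ) * (y + μ) :=
      (integral_add_right_eq_self (fun x => gaussianPDFReal μ v x * x) μ).symm
    rw [hshift]
    have heq : (fun y : ℝ => gaussianPDFReal μ v (y + μ) * (y + μ))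
        = fun y : ℝ => c * (y * rexp (-b * y ^ 2)) + (c * μ) * rexp (-b * y ^ 2) := by
      funext y
      rw [my_pdf_shift μ v y]
      ring
    rw [heq, integral_add (((integrable_mul_exp_neg_mul_sq hb).const_mul c))
      ((integrable_exp_neg_mul_sq hb).const_mul _), integral_const_mul, integral_const_mul,
      my_integral_mul_exp_neg_mul_sq_zero hb, integral_gaussian, mul_zero, zero_add,
      mul_assoc]
    rw [show c * (μ * Real.sqrt (π / b)) = μ * (c * Real.sqrt (π / b)) by ring,
      my_norm_const hv, mul_one]

lemma my_integrable_sq_gaussianReal (μ : ℝ) (v : ℝ≥0) :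
    Integrable (fun x : ℝ => x ^ 2) (gaussianReal μ v) := by
  by_cases hv : v = 0
  · rw [hv, gaussianReal_zero_var]
    refine ⟨(measurable_id.pow_const 2).aestronglyMeasurable, ?_⟩
    rw [HasFiniteIntegral, lintegral_dirac]
    exact ENNReal.coe_lt_top
  · rw [my_integrable_gaussianReal_iff hv]
    set c : ℝ := (Real.sqrt (2 * π * v))⁻¹ with hc
    set b : ℝ := (2 * (v : ℝ))⁻¹ with hbdef
    have hb : 0 < b := my_vpos hv
    have hemb := (MeasurableEquiv.addRight μ).measurableEmbedding
    have hmp : MeasurePreserving (fun y : ℝ => y + μ) volume volume :=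
      measurePreserving_add_right volume μ
    rw [← hmp.integrable_comp_emb hemb]
    have heq : (fun x : ℝ => x ^ 2 * gaussianPDFReal μ v x) ∘ (fun y : ℝ => y + μ)
        = fun y : ℝ => c * (y ^ 2 * rexp (-b * y ^ 2)) + ((2 * c * μ) * (y * rexp (-b * y ^ 2))
            + (c * μ ^ 2) * rexp (-b * y ^ 2)) := by
      funext y
      simp only [Function.comp_apply, my_pdf_shift μ v y]
      ring
    rw [heq]
    exact ((my_integrable_sq_mul_exp hb).const_mul c).add
      (((integrable_mul_exp_neg_mul_sq hb).const_mul _).add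
        ((integrable_exp_neg_mul_sq hb).const_mul _))

lemma my_integral_sq_gaussianReal (μ : ℝ) (v : ℝ≥0) :
    ∫ x, x ^ 2 ∂(gaussianReal μ v) = (v : ℝ) + μ ^ 2 := by
  by_cases hv : v = 0
  · simp [hv, gaussianReal_zero_var, integral_dirac]
  · set c : ℝ := (Real.sqrt (2 * π * v))⁻¹ with hc
    set b : ℝ := (2 * (v : ℝ))⁻¹ with hbdef
    have hb : 0 < b := my_vpos hv
    rw [my_integral_gaussianReal hv]
    have hshift : ∫ x : ℝ, gaussianPDFReal μ v x * x ^ 2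
        = ∫ y : ℝ, gaussianPDFReal μ v (y + μ) * (y + μ) ^ 2 :=
      (integral_add_right_eq_self (fun x => gaussianPDFReal μ v x * x ^ 2) μ).symm
    rw [hshift]
    have heq : (fun y : ℝ => gaussianPDFReal μ v (y + μ) * (y + μ) ^ 2)
        = fun y : ℝ => c * (y ^ 2 * rexp (-b * y ^ 2)) + ((2 * c * μ) * (y * rexp (-b * y ^ 2))
            + (c * μ ^ 2) * rexp (-b * y ^ 2)) := by
      funext y
      rw [my_pdf_shift μ v y]
      ring
    have hBC : Integrable (fun y : ℝ => (2 * c * μ) * (y * rexp (-b * y ^ 2))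
        + (c * μ ^ 2) * rexp (-b * y ^ 2)) (volume : Measure ℝ) := by
      exact ((integrable_mul_exp_neg_mul_sq hb).const_mul _).add
        ((integrable_exp_neg_mul_sq hb).const_mul _)
    rw [heq, integral_add ((my_integrable_sq_mul_exp hb).const_mul c) hBC,
      integral_add ((integrable_mul_exp_neg_mul_sq hb).const_mul _)
        ((integrable_exp_neg_mul_sq hb).const_mul _),
      integral_const_mul, integral_const_mul, integral_const_mul,
      my_integral_mul_exp_neg_mul_sq_zero hb, my_integral_sq_mul_exp hb, integral_gaussian,
      mul_zero]
    have h2b : (2 * b)⁻¹ = (v : ℝ) := by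
      rw [hbdef]
      have : (v : ℝ) ≠ 0 := by exact_mod_cast hv
      field_simp
    have hnorm := my_norm_const (v := v) hv
    rw [← hc] at hnorm
    calc c * ((2 * b)⁻¹ * Real.sqrt (π / b)) + (0 + c * μ ^ 2 * Real.sqrt (π / b))
        = (2 * b)⁻¹ * (c * Real.sqrt (π / b)) + μ ^ 2 * (c * Real.sqrt (π / b)) := by ring
      _ = (v : ℝ) + μ ^ 2 := by rw [hnorm, h2b]; ring

lemma my_gaussianReal_eq_map (μ : ℝ) (v : ℝ≥0) :
    gaussianReal μ v
      = Measure.map (fun x => Real.sqrt v * x + μ) (gaussianReal 0 1) := by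
  have h1 : (gaussianReal (0:ℝ) 1).map (fun x => Real.sqrt v * x) = gaussianReal 0 v := by
    have := gaussianReal_map_const_mul (μ := 0) (v := 1) (Real.sqrt v)
    have h2 : (⟨Real.sqrt v ^ 2, sq_nonneg _⟩ * 1 : ℝ≥0) = v := by
      exact NNReal.eq (by
        show Real.sqrt v ^ 2 * 1 = (v : ℝ)
        rw [mul_one]; exact Real.sq_sqrt v.2)
    simpa [h2] using this
  have h3 : (gaussianReal (0:ℝ) v).map (· + μ) = gaussianReal μ v := by
    simpa using gaussianReal_map_add_const (μ := 0) (v := v) μ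
  rw [← h3, ← h1, Measure.map_map (by fun_prop) (by fun_prop)]
  rfl

lemma my_tail_eq (μ : ℝ) (v : ℝ≥0) (hv : v ≠ 0) (t : ℝ) :
    gaussianReal μ v {x | t ≤ x}
      = gaussianReal 0 1 {y | (t - μ) / Real.sqrt v ≤ y} := by
  rw [my_gaussianReal_eq_map, Measure.map_apply (by fun_prop) (show MeasurableSet {x : ℝ | t ≤ x} from measurableSet_Ici)]
  congr 1
  ext y
  have hs : 0 < Real.sqrt v := Real.sqrt_pos.2 (by positivity)
  simp only [Set.mem_preimage, Set.mem_setOf_eq, Set.mem_Ici]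
  rw [div_le_iff₀ hs]
  constructor <;> intro h <;> nlinarith [h]

lemma my_ltail_eq (μ : ℝ) (v : ℝ≥0) (hv : v ≠ 0) (t : ℝ) :
    gaussianReal μ v {x | x < t}
      = gaussianReal 0 1 {y | y < (t - μ) / Real.sqrt v} := by
  rw [my_gaussianReal_eq_map, Measure.map_apply (by fun_prop) (show MeasurableSet {x : ℝ | x < t} from measurableSet_Iio)]
  congr 1
  ext y
  have hs : 0 < Real.sqrt v := Real.sqrt_pos.2 (by positivity)
  simp only [Set.mem_preimage, Set.mem_setOf_eq, Set.mem_Iio]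
  rw [lt_div_iff₀ hs]
  constructor <;> intro h <;> nlinarith [h]

lemma my_gaussian_interval_pos {a b : ℝ} (hab : a < b) :
    0 < gaussianReal 0 1 (Set.Ico a b) := by
  rw [gaussianReal_of_var_ne_zero 0 one_ne_zero, withDensity_apply _ measurableSet_Ico]
  rw [pos_iff_ne_zero]
  intro h
  rw [lintegral_eq_zero_iff (measurable_gaussianPDF 0 1)] at h
  have h2 : (volume.restrict (Set.Ico a b)) {x | gaussianPDF 0 1 x ≠ 0} = 0 := h
  have h3 : {x : ℝ | gaussianPDF 0 1 x ≠ 0} = Set.univ := by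
    ext x
    simp [ne_of_gt (gaussianPDF_pos 0 one_ne_zero x)]
  rw [h3, Measure.restrict_apply_univ] at h2
  rw [Real.volume_Ico] at h2
  exact (ENNReal.ofReal_pos.2 (by linarith)).ne' h2

lemma my_SN_tail_pos (c : ℝ) : 0 < gaussianReal 0 1 {y | c ≤ y} := by
  refine lt_of_lt_of_le (my_gaussian_interval_pos (show c < c + 1 by linarith)) ?_
  exact measure_mono (fun x hx => hx.1)

lemma my_SN_ltail_pos (c : ℝ) : 0 < gaussianReal 0 1 {y | y < c} := by
  refine lt_of_lt_of_le (my_gaussian_interval_pos (show c - 1 < c by linarith)) ?_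
  exact measure_mono (fun x hx => hx.2)

lemma my_SN_tail_gap {c₁ c₂ : ℝ} (h : c₁ < c₂) :
    gaussianReal 0 1 {y | c₂ ≤ y} + gaussianReal 0 1 (Set.Ico c₁ c₂)
      ≤ gaussianReal 0 1 {y | c₁ ≤ y} := by
  have hd : Disjoint (Set.Ico c₁ c₂) {y : ℝ | c₂ ≤ y} := by
    rw [Set.disjoint_left]
    intro x hx hx2
    exact absurd hx2 (not_le.2 hx.2)
  have hu : Set.Ico c₁ c₂ ∪ {y : ℝ | c₂ ≤ y} = {y : ℝ | c₁ ≤ y} := by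
    ext x
    simp only [Set.mem_union, Set.mem_Ico, Set.mem_setOf_eq]
    constructor
    · rintro (⟨h1, _⟩ | h1)
      · exact h1
      · linarith
    · intro h1
      rcases lt_or_ge x c₂ with h2 | h2
      · exact Or.inl ⟨h1, h2⟩
      · exact Or.inr h2
  rw [← hu, measure_union hd (show MeasurableSet {y : ℝ | c₂ ≤ y} from measurableSet_Ici),
    add_comm]

lemma my_SN_ltail_gap {c₁ c₂ : ℝ} (h : c₁ < c₂) :
    gaussianReal 0 1 {y | y < c₁} + gaussianReal 0 1 (Set.Ico c₁ c₂)
      ≤ gaussianReal 0 1 {y | y < c₂} := by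
  have hd : Disjoint {y : ℝ | y < c₁} (Set.Ico c₁ c₂) := by
    rw [Set.disjoint_left]
    intro x hx hx2
    exact absurd hx2.1 (not_le.2 hx)
  have hu : {y : ℝ | y < c₁} ∪ Set.Ico c₁ c₂ = {y : ℝ | y < c₂} := by
    ext x
    simp only [Set.mem_union, Set.mem_Ico, Set.mem_setOf_eq]
    constructor
    · rintro (h1 | ⟨_, h2⟩)
      · linarith
      · exact h2
    · intro h1
      rcases lt_or_ge x c₁ with h2 | h2
      · exact Or.inl h2
      · exact Or.inr ⟨h2, h1⟩
  rw [← hu, measure_union hd measurableSet_Ico]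

end AuxiliaryLemmas

/-- Necessity direction of Proposition 2 at a fixed point: if `Z` is Gaussian with positive
variance, the prediction errors `sₘ² = E[(Z − Z̃ₘ)²]` are nonincreasing and do not tend to
`0`, the predictors are conditional expectations `Z̃ₘ = E[Z | Fₘ]` for an increasing
filtration making each pair `(Z, Z̃ₘ)` jointly Gaussian, `E[Z] ≠ t`, and
`|t − E[Z]|/√Var(Z) ∈ [1/M, M]` for some `M > 1`, then the probability of misclassifying
the excursion event `{Z ≥ t}` stays bounded away from zero. -/
theorem misclassification_prob_bounded_below_of_not_tendsto_zero
    {Ω : Type*} [m0 : MeasurableSpace Ω] (P : Measure Ω) [IsProbabilityMeasure P]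
    (Z : Ω → ℝ) (Ztil : ℕ → Ω → ℝ) (t m₀ M : ℝ) (v : NNReal) (hv : 0 < v)
    (hZ : Measure.map Z P = gaussianReal m₀ v)
    (hint : ∀ m, Integrable (fun ω => (Z ω - Ztil m ω) ^ 2) P)
    (hanti : Antitone (fun m => ∫ ω, (Z ω - Ztil m ω) ^ 2 ∂P))
    (hnot : ¬ Tendsto (fun m => ∫ ω, (Z ω - Ztil m ω) ^ 2 ∂P) atTop (nhds 0))
    (F : ℕ → MeasurableSpace Ω) (hFmono : Monotone F) (hFle : ∀ m, F m ≤ m0)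
    (hcond : ∀ m, Ztil m =ᵐ[P] P[Z | F m])
    (hjointGauss : ∀ (m : ℕ) (a b : ℝ), ∃ (μ' : ℝ) (v' : NNReal),
      Measure.map (fun ω => a * Z ω + b * Ztil m ω) P = gaussianReal μ' v')
    (ht : m₀ ≠ t) (hM : 1 < M)
    (hratio : |t - m₀| / Real.sqrt v ∈ Set.Icc (1 / M) M) :
    ∃ ε' > (0 : ℝ), ∀ m,
      ε' ≤ (P {ω | Z ω ≥ t ∧ Ztil m ω < t}).toReal
            + (P {ω | Z ω < t ∧ Ztil m ω ≥ t}).toReal := by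
  set sfun : ℕ → ℝ := fun m => ∫ ω, (Z ω - Ztil m ω) ^ 2 ∂P with hsfun
  have hs_nonneg : ∀ m, 0 ≤ sfun m := fun m => integral_nonneg fun ω => sq_nonneg _
  have hbdd : BddBelow (Set.range sfun) := by
    refine ⟨0, ?_⟩
    rintro x ⟨m, rfl⟩
    exact hs_nonneg m
  set L : ℝ := ⨅ m, sfun m with hLdef
  have htendsto : Tendsto sfun atTop (𝓝 L) := tendsto_atTop_ciInf hanti hbdd
  have hL_nonneg : 0 ≤ L := le_ciInf hs_nonneg
  have hL_pos : 0 < L := by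
    rcases hL_nonneg.lt_or_eq with h | h
    · exact h
    · exact absurd (h ▸ htendsto) hnot
  have hL_le : ∀ m, L ≤ sfun m := fun m => ciInf_le hbdd m
  -- Z facts
  have hZae : AEMeasurable Z P :=
    aemeasurable_of_map_neZero (by rw [hZ]; infer_instance)
  have hZsq_int : Integrable (fun ω => Z ω ^ 2) P := by
    have h1 : Integrable (fun x : ℝ => x ^ 2) (Measure.map Z P) := by
      rw [hZ]; exact my_integrable_sq_gaussianReal m₀ v
    have := (integrable_map_measure
      ((measurable_id.pow_const 2).aestronglyMeasurable) hZae).mp h1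
    exact this
  have hZmean : ∫ ω, Z ω ∂P = m₀ := by
    have h2 : ∫ x, x ∂(Measure.map Z P) = ∫ ω, Z ω ∂P :=
      integral_map hZae aestronglyMeasurable_id
    rw [← h2, hZ, my_integral_id_gaussianReal]
  have hZsq : ∫ ω, Z ω ^ 2 ∂P = (v : ℝ) + m₀ ^ 2 := by
    have h2 : ∫ x, x ^ 2 ∂(Measure.map Z P) = ∫ ω, Z ω ^ 2 ∂P :=
      integral_map hZae ((measurable_id.pow_const 2).aestronglyMeasurable)
    rw [← h2, hZ, my_integral_sq_gaussianReal]
  have hZint : Integrable Z P := by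
    have hZL2 : MemLp Z 2 P :=
      (memLp_two_iff_integrable_sq hZae.aestronglyMeasurable).2 hZsq_int
    exact hZL2.integrable one_le_two
  -- key per-m fact
  have hkey : ∀ m, ∃ vm : ℝ≥0, Measure.map (Ztil m) P = gaussianReal m₀ vm ∧
      (vm : ℝ) = (v : ℝ) - sfun m := by
    intro m
    obtain ⟨μ₁, v₁, hmap⟩ := hjointGauss m 0 1
    have hmap' : Measure.map (Ztil m) P = gaussianReal μ₁ v₁ := by
      have : (fun ω => (0 : ℝ) * Z ω + 1 * Ztil m ω) = Ztil m := by
        funext ω; ring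
      rwa [this] at hmap
    have hWae : AEMeasurable (Ztil m) P :=
      aemeasurable_of_map_neZero (by rw [hmap']; infer_instance)
    have hWsq_int : Integrable (fun ω => Ztil m ω ^ 2) P := by
      have h1 : Integrable (fun x : ℝ => x ^ 2) (Measure.map (Ztil m) P) := by
        rw [hmap']; exact my_integrable_sq_gaussianReal μ₁ v₁
      have := (integrable_map_measure
        ((measurable_id.pow_const 2).aestronglyMeasurable) hWae).mp h1
      exact this
    have hWmean : ∫ ω, Ztil m ω ∂P = μ₁ := by
      have h2 : ∫ x, x ∂(Measure.map (Ztil m) P) = ∫ ω, Ztil m ω ∂P :=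
        integral_map hWae aestronglyMeasurable_id
      rw [← h2, hmap', my_integral_id_gaussianReal]
    have hWsqval : ∫ ω, Ztil m ω ^ 2 ∂P = (v₁ : ℝ) + μ₁ ^ 2 := by
      have h2 : ∫ x, x ^ 2 ∂(Measure.map (Ztil m) P) = ∫ ω, Ztil m ω ^ 2 ∂P :=
        integral_map hWae ((measurable_id.pow_const 2).aestronglyMeasurable)
      rw [← h2, hmap', my_integral_sq_gaussianReal]
    haveI : SigmaFinite (P.trim (hFle m)) := by infer_instance
    have hWmean' : ∫ ω, Ztil m ω ∂P = m₀ := by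
      rw [integral_congr_ae (hcond m), integral_condExp (hFle m), hZmean]
    have hμ₁ : μ₁ = m₀ := by rw [← hWmean, hWmean']
    -- orthogonality
    have hsum : Integrable (fun ω => Ztil m ω ^ 2 + Z ω ^ 2) P := by
      exact hWsq_int.add hZsq_int
    have hWZ_int : Integrable (fun ω => Ztil m ω * Z ω) P := by
      refine Integrable.mono' hsum
        ((hWae.mul hZae).aestronglyMeasurable) ?_
      refine Filter.Eventually.of_forall fun ω => ?_
      rw [Real.norm_eq_abs, abs_mul]
      nlinarith [sq_nonneg (|Ztil m ω| - |Z ω|), abs_nonneg (Ztil m ω), abs_nonneg (Z ω),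
        sq_abs (Ztil m ω), sq_abs (Z ω)]
    have horth : ∫ ω, Ztil m ω * Z ω ∂P = ∫ ω, Ztil m ω ^ 2 ∂P := by
      set g : Ω → ℝ := P[Z|F m] with hg
      have hgZ_int : Integrable (fun ω => g ω * Z ω) P :=
        hWZ_int.congr ((hcond m).mul (Filter.EventuallyEq.refl _ Z))
      have hmul : P[g * Z|F m] =ᵐ[P] g * P[Z|F m] :=
        condExp_mul_of_stronglyMeasurable_left stronglyMeasurable_condExp hgZ_int hZint
      calc ∫ ω, Ztil m ω * Z ω ∂P
          = ∫ ω, g ω * Z ω ∂P :=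
            integral_congr_ae ((hcond m).mul (Filter.EventuallyEq.refl _ Z))
        _ = ∫ ω, (P[g * Z|F m]) ω ∂P := (integral_condExp (hFle m)).symm
        _ = ∫ ω, g ω * g ω ∂P := integral_congr_ae hmul
        _ = ∫ ω, Ztil m ω ^ 2 ∂P := by
            refine integral_congr_ae ?_
            filter_upwards [hcond m] with ω hω
            rw [← hg] at hω
            rw [hω]; ring
    have hs_eq : sfun m = (v : ℝ) - (v₁ : ℝ) := by
      have hexp : (fun ω => (Z ω - Ztil m ω) ^ 2)
          = fun ω => (Z ω ^ 2 + Ztil m ω ^ 2) - 2 * (Ztil m ω * Z ω) := by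
        funext ω; ring
      have : sfun m = ∫ ω, ((Z ω ^ 2 + Ztil m ω ^ 2) - 2 * (Ztil m ω * Z ω)) ∂P := by
        rw [hsfun]; exact congrArg _ hexp
      have hsum2 : Integrable (fun ω => Z ω ^ 2 + Ztil m ω ^ 2) P := by
        exact hZsq_int.add hWsq_int
      have h2mul : Integrable (fun ω => 2 * (Ztil m ω * Z ω)) P := by
        exact hWZ_int.const_mul 2
      rw [this, integral_sub hsum2 h2mul,
        integral_add hZsq_int hWsq_int, integral_const_mul, horth, hZsq, hWsqval, hμ₁]
      ring
    refine ⟨v₁, by rwa [hμ₁] at hmap', by rw [hs_eq]; ring⟩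
  -- bound variance from below by 0 and get L ≤ v
  have hvL_nonneg : 0 ≤ (v : ℝ) - L := by
    obtain ⟨v0, _, hv0⟩ := hkey 0
    have h0 : (0 : ℝ) ≤ (v0 : ℝ) := v0.coe_nonneg
    have h1 := hL_le 0
    linarith
  set u₀ : ℝ≥0 := ⟨(v : ℝ) - L, hvL_nonneg⟩ with hu₀
  have hu₀lt : (u₀ : ℝ) < (v : ℝ) := by
    show (v : ℝ) - L < (v : ℝ)
    linarith
  have hvm_le_u₀ : ∀ m, ∀ vm : ℝ≥0, (vm : ℝ) = (v : ℝ) - sfun m → vm ≤ u₀ := by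
    intro m vm hvm
    rw [← NNReal.coe_le_coe, hvm]
    show (v : ℝ) - sfun m ≤ (v : ℝ) - L
    linarith [hL_le m]
  have hvne : v ≠ 0 := hv.ne'
  have hWae' : ∀ m, AEMeasurable (Ztil m) P := by
    intro m
    obtain ⟨vm, hmapm, _⟩ := hkey m
    exact aemeasurable_of_map_neZero (by rw [hmapm]; infer_instance)
  rcases ht.lt_or_gt with hcase | hcase
  -- Case m₀ < t : compare right tails
  · set rtail : ℝ≥0 → ℝ≥0∞ := fun u => gaussianReal m₀ u {x | t ≤ x} with hrt
    have hdir : gaussianReal m₀ (0 : ℝ≥0) {x | t ≤ x} = 0 := by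
      rw [gaussianReal_zero_var,
        Measure.dirac_apply' _ (show MeasurableSet {x : ℝ | t ≤ x} from measurableSet_Ici)]
      simp [Set.indicator, not_le.2 hcase]
    have hcmono : ∀ u₁ u₂ : ℝ≥0, u₁ ≠ 0 → u₁ ≤ u₂ →
        (t - m₀) / Real.sqrt u₂ ≤ (t - m₀) / Real.sqrt u₁ := by
      intro u₁ u₂ h1 h12
      have hpos : (0 : ℝ) < Real.sqrt u₁ := Real.sqrt_pos.2 (by positivity)
      have hs12 : Real.sqrt (u₁ : ℝ) ≤ Real.sqrt (u₂ : ℝ) :=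
        Real.sqrt_le_sqrt (by exact_mod_cast h12)
      have hnum : (0 : ℝ) ≤ t - m₀ := by linarith
      gcongr
    have hrt_mono : ∀ u₁ u₂ : ℝ≥0, u₁ ≤ u₂ → rtail u₁ ≤ rtail u₂ := by
      intro u₁ u₂ h12
      by_cases h1 : u₁ = 0
      · rw [hrt]; simp only [h1, hdir]; exact zero_le
      · have h2 : u₂ ≠ 0 := fun h => h1 (le_antisymm (h ▸ h12) (zero_le))
        rw [hrt]
        simp only
        rw [my_tail_eq _ _ h1 t, my_tail_eq _ _ h2 t]
        exact measure_mono (fun y hy => le_trans (hcmono u₁ u₂ h1 h12) hy)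
    have hgap : 0 < (rtail v).toReal - (rtail u₀).toReal := by
      have hvpos : 0 < (rtail v).toReal := by
        refine ENNReal.toReal_pos ?_ (measure_ne_top _ _)
        rw [hrt]; simp only
        rw [my_tail_eq _ _ hvne t]
        exact (my_SN_tail_pos _).ne'
      by_cases h0 : u₀ = 0
      · rw [hrt]; simp only [h0, hdir]
        simpa using hvpos
      · have hlt : rtail u₀ < rtail v := by
          have hppos : (0 : ℝ) < Real.sqrt u₀ := Real.sqrt_pos.2 (by positivity)
          have hs12 : Real.sqrt ((u₀ : ℝ)) < Real.sqrt ((v : ℝ)) :=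
            Real.sqrt_lt_sqrt u₀.coe_nonneg hu₀lt
          have hnum : (0 : ℝ) < t - m₀ := by linarith
          have hcc : (t - m₀) / Real.sqrt v < (t - m₀) / Real.sqrt u₀ := by gcongr
          have hgap2 := my_SN_tail_gap hcc
          rw [hrt]; simp only
          rw [my_tail_eq _ _ h0 t, my_tail_eq _ _ hvne t]
          calc gaussianReal 0 1 {y | (t - m₀) / Real.sqrt u₀ ≤ y}
              < gaussianReal 0 1 {y | (t - m₀) / Real.sqrt u₀ ≤ y}
                  + gaussianReal 0 1 (Set.Ico ((t - m₀) / Real.sqrt v)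
                    ((t - m₀) / Real.sqrt u₀)) := by
                exact ENNReal.lt_add_right (measure_ne_top _ _)
                  (my_gaussian_interval_pos hcc).ne'
            _ ≤ gaussianReal 0 1 {y | (t - m₀) / Real.sqrt v ≤ y} := hgap2
        have := (ENNReal.toReal_lt_toReal (measure_ne_top _ _) (measure_ne_top _ _)).2 hlt
        linarith
    refine ⟨_, hgap, ?_⟩
    intro m
    obtain ⟨vm, hmapm, hvm⟩ := hkey m
    have hPZ : P {ω | t ≤ Z ω} = rtail v := by
      have h := Measure.map_apply_of_aemeasurable hZae
        (show MeasurableSet {x : ℝ | t ≤ x} from measurableSet_Ici)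
      rw [hZ] at h
      exact h.symm
    have hPW : P {ω | t ≤ Ztil m ω} = rtail vm := by
      have h := Measure.map_apply_of_aemeasurable (hWae' m)
        (show MeasurableSet {x : ℝ | t ≤ x} from measurableSet_Ici)
      rw [hmapm] at h
      exact h.symm
    have hsub : {ω | t ≤ Z ω} ⊆ {ω | Z ω ≥ t ∧ Ztil m ω < t} ∪ {ω | t ≤ Ztil m ω} := by
      intro ω hω
      by_cases h : Ztil m ω < t
      · exact Or.inl ⟨hω, h⟩
      · exact Or.inr (not_lt.1 h)
    have hP1 : P {ω | t ≤ Z ω}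
        ≤ P {ω | Z ω ≥ t ∧ Ztil m ω < t} + P {ω | t ≤ Ztil m ω} :=
      (measure_mono hsub).trans (measure_union_le _ _)
    have hP1' : (P {ω | t ≤ Z ω}).toReal
        ≤ (P {ω | Z ω ≥ t ∧ Ztil m ω < t}).toReal + (P {ω | t ≤ Ztil m ω}).toReal := by
      rw [← ENNReal.toReal_add (measure_ne_top _ _) (measure_ne_top _ _)]
      exact ENNReal.toReal_mono
        (ENNReal.add_ne_top.2 ⟨measure_ne_top _ _, measure_ne_top _ _⟩) hP1
    have hmono' : (rtail vm).toReal ≤ (rtail u₀).toReal :=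
      ENNReal.toReal_mono (measure_ne_top _ _) (hrt_mono vm u₀ (hvm_le_u₀ m vm hvm))
    have hb0 : 0 ≤ (P {ω | Z ω < t ∧ Ztil m ω ≥ t}).toReal := ENNReal.toReal_nonneg
    rw [hPZ] at hP1'
    rw [hPW] at hP1'
    linarith
  -- Case t < m₀ : compare left tails
  · set ltail : ℝ≥0 → ℝ≥0∞ := fun u => gaussianReal m₀ u {x | x < t} with hrt
    have hdir : gaussianReal m₀ (0 : ℝ≥0) {x | x < t} = 0 := by
      rw [gaussianReal_zero_var,
        Measure.dirac_apply' _ (show MeasurableSet {x : ℝ | x < t} from measurableSet_Iio)]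
      simp [not_lt.2 (le_of_lt hcase)]
    have hcmono : ∀ u₁ u₂ : ℝ≥0, u₁ ≠ 0 → u₁ ≤ u₂ →
        (t - m₀) / Real.sqrt u₁ ≤ (t - m₀) / Real.sqrt u₂ := by
      intro u₁ u₂ h1 h12
      have hpos : (0 : ℝ) < Real.sqrt u₁ := Real.sqrt_pos.2 (by positivity)
      have hs12 : Real.sqrt (u₁ : ℝ) ≤ Real.sqrt (u₂ : ℝ) :=
        Real.sqrt_le_sqrt (by exact_mod_cast h12)
      have hnum : (0 : ℝ) ≤ m₀ - t := by linarith
      have h4 : (m₀ - t) / Real.sqrt u₂ ≤ (m₀ - t) / Real.sqrt u₁ := by gcongr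
      have e1 : (t - m₀) / Real.sqrt u₁ = -((m₀ - t) / Real.sqrt u₁) := by ring
      have e2 : (t - m₀) / Real.sqrt u₂ = -((m₀ - t) / Real.sqrt u₂) := by ring
      linarith
    have hrt_mono : ∀ u₁ u₂ : ℝ≥0, u₁ ≤ u₂ → ltail u₁ ≤ ltail u₂ := by
      intro u₁ u₂ h12
      by_cases h1 : u₁ = 0
      · rw [hrt]; simp only [h1, hdir]; exact zero_le
      · have h2 : u₂ ≠ 0 := fun h => h1 (le_antisymm (h ▸ h12) (zero_le))
        rw [hrt]
        simp only
        rw [my_ltail_eq _ _ h1 t, my_ltail_eq _ _ h2 t]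
        exact measure_mono (fun y hy => lt_of_lt_of_le hy (hcmono u₁ u₂ h1 h12))
    have hgap : 0 < (ltail v).toReal - (ltail u₀).toReal := by
      have hvpos : 0 < (ltail v).toReal := by
        refine ENNReal.toReal_pos ?_ (measure_ne_top _ _)
        rw [hrt]; simp only
        rw [my_ltail_eq _ _ hvne t]
        exact (my_SN_ltail_pos _).ne'
      by_cases h0 : u₀ = 0
      · rw [hrt]; simp only [h0, hdir]
        simpa using hvpos
      · have hlt : ltail u₀ < ltail v := by
          have hppos : (0 : ℝ) < Real.sqrt u₀ := Real.sqrt_pos.2 (by positivity)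
          have hs12 : Real.sqrt ((u₀ : ℝ)) < Real.sqrt ((v : ℝ)) :=
            Real.sqrt_lt_sqrt u₀.coe_nonneg hu₀lt
          have hnum : (0 : ℝ) < m₀ - t := by linarith
          have h4 : (m₀ - t) / Real.sqrt v < (m₀ - t) / Real.sqrt u₀ := by gcongr
          have hcc : (t - m₀) / Real.sqrt u₀ < (t - m₀) / Real.sqrt v := by
            have e1 : (t - m₀) / Real.sqrt u₀ = -((m₀ - t) / Real.sqrt u₀) := by ring
            have e2 : (t - m₀) / Real.sqrt v = -((m₀ - t) / Real.sqrt v) := by ring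
            linarith
          have hgap2 := my_SN_ltail_gap hcc
          rw [hrt]; simp only
          rw [my_ltail_eq _ _ h0 t, my_ltail_eq _ _ hvne t]
          calc gaussianReal 0 1 {y | y < (t - m₀) / Real.sqrt u₀}
              < gaussianReal 0 1 {y | y < (t - m₀) / Real.sqrt u₀}
                  + gaussianReal 0 1 (Set.Ico ((t - m₀) / Real.sqrt u₀)
                    ((t - m₀) / Real.sqrt v)) := by
                exact ENNReal.lt_add_right (measure_ne_top _ _)
                  (my_gaussian_interval_pos hcc).ne'
            _ ≤ gaussianReal 0 1 {y | y < (t - m₀) / Real.sqrt v} := hgap2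
        have := (ENNReal.toReal_lt_toReal (measure_ne_top _ _) (measure_ne_top _ _)).2 hlt
        linarith
    refine ⟨_, hgap, ?_⟩
    intro m
    obtain ⟨vm, hmapm, hvm⟩ := hkey m
    have hPZ : P {ω | Z ω < t} = ltail v := by
      have h := Measure.map_apply_of_aemeasurable hZae
        (show MeasurableSet {x : ℝ | x < t} from measurableSet_Iio)
      rw [hZ] at h
      exact h.symm
    have hPW : P {ω | Ztil m ω < t} = ltail vm := by
      have h := Measure.map_apply_of_aemeasurable (hWae' m)
        (show MeasurableSet {x : ℝ | x < t} from measurableSet_Iio)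
      rw [hmapm] at h
      exact h.symm
    have hsub : {ω | Z ω < t} ⊆ {ω | Z ω < t ∧ Ztil m ω ≥ t} ∪ {ω | Ztil m ω < t} := by
      intro ω hω
      by_cases h : Ztil m ω < t
      · exact Or.inr h
      · exact Or.inl ⟨hω, not_lt.1 h⟩
    have hP1 : P {ω | Z ω < t}
        ≤ P {ω | Z ω < t ∧ Ztil m ω ≥ t} + P {ω | Ztil m ω < t} :=
      (measure_mono hsub).trans (measure_union_le _ _)
    have hP1' : (P {ω | Z ω < t}).toReal
        ≤ (P {ω | Z ω < t ∧ Ztil m ω ≥ t}).toReal + (P {ω | Ztil m ω < t}).toReal := by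
      rw [← ENNReal.toReal_add (measure_ne_top _ _) (measure_ne_top _ _)]
      exact ENNReal.toReal_mono
        (ENNReal.add_ne_top.2 ⟨measure_ne_top _ _, measure_ne_top _ _⟩) hP1
    have hmono' : (ltail vm).toReal ≤ (ltail u₀).toReal :=
      ENNReal.toReal_mono (measure_ne_top _ _) (hrt_mono vm u₀ (hvm_le_u₀ m vm hvm))
    have hb0 : 0 ≤ (P {ω | Z ω ≥ t ∧ Ztil m ω < t}).toReal := ENNReal.toReal_nonneg
    rw [hPZ] at hP1'
    rw [hPW] at hP1'
    linarith
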